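/- Let γ > 0 and consider the one-dimensional transition energy j^γ(z) = ∫_ℝ (γ/2)(z'')² + (1/2)(z')² + (1/2)(1 - z²) dx over the class V of odd C² functions z : ℝ → [-1,1] that are nondecreasing and equal ±1 outside a compact interval. Then the infimum P^γ = inf_{z ∈ V} j^γ(z) is finite and strictly positive. -/

import Mathlib

open Real Set MeasureTheory intervalIntegral Filter Function

private lemma glue_mono : Monotone expNegInvGlue := by
  intro a b hab
  rcases le_or_gt a 0 with ha | ha
  · rw [expNegInvGlue.zero_of_nonpos ha]; exact expNegInvGlue.nonneg b
  · have hb : 0 < b := lt_of_lt_of_le ha hab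
    simp only [expNegInvGlue, if_neg (not_le.2 ha), if_neg (not_le.2 hb)]
    exact Real.exp_le_exp.2 (neg_le_neg (inv_anti₀ ha hab))

private lemma st_mono : Monotone Real.smoothTransition := by
  intro a b hab
  unfold Real.smoothTransition
  rw [div_le_div_iff₀ (Real.smoothTransition.pos_denom a)
    (Real.smoothTransition.pos_denom b)]
  have h1 : expNegInvGlue a * expNegInvGlue (1 - b)
      ≤ expNegInvGlue b * expNegInvGlue (1 - a) := by
    calc expNegInvGlue a * expNegInvGlue (1 - b)
        ≤ expNegInvGlue b * expNegInvGlue (1 - b) :=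
          mul_le_mul_of_nonneg_right (glue_mono hab) (expNegInvGlue.nonneg _)
      _ ≤ expNegInvGlue b * expNegInvGlue (1 - a) :=
          mul_le_mul_of_nonneg_left (glue_mono (by linarith)) (expNegInvGlue.nonneg _)
  nlinarith [h1]

private lemma mono_deriv_nonneg {f : ℝ → ℝ} (hf : Monotone f) (x : ℝ) :
    0 ≤ deriv f x := by
  by_cases h : DifferentiableAt ℝ f x
  · have ht := hasDerivAt_iff_tendsto_slope.1 h.hasDerivAt
    refine ge_of_tendsto ht ?_
    filter_upwards [self_mem_nhdsWithin] with y hy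
    have hy' : y ≠ x := hy
    rw [slope_def_field, div_nonneg_iff]
    rcases lt_or_gt_of_ne hy' with hlt | hgt
    · right
      have := hf hlt.le
      constructor <;> linarith
    · left
      have := hf hgt.le
      constructor <;> linarith
  · rw [deriv_zero_of_not_differentiableAt h]

noncomputable def z₀ : ℝ → ℝ :=
  fun x => Real.smoothTransition x - Real.smoothTransition (-x)

private lemma z₀_mono : Monotone z₀ := by
  intro a b hab
  have h1 := st_mono hab
  have h2 := st_mono (neg_le_neg hab)
  simp only [z₀]
  linarith

private lemma deriv_vanish {z : ℝ → ℝ} {s : Set ℝ} (hs : IsOpen s) {c : ℝ}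
    (h : ∀ y ∈ s, z y = c) {x : ℝ} (hx : x ∈ s) : deriv z x = 0 := by
  have he : z =ᶠ[nhds x] fun _ => c :=
    Filter.eventuallyEq_of_mem (hs.mem_nhds hx) (fun y hy => h y hy)
  rw [he.deriv_eq, deriv_const]

/-- The key uniform lower bound: for any admissible `z`, the energy is at least `4/3`. -/
private lemma key_bound (γ : ℝ) (hγ : 0 < γ) {z : ℝ → ℝ} (hz : ContDiff ℝ 2 z)
    (hrange : ∀ x, z x ∈ Set.Icc (-1 : ℝ) 1) (hmono : ∀ x, 0 ≤ deriv z x)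
    {δ : ℝ} (hδ : 0 < δ) (h1 : ∀ x > δ, z x = 1) (h2 : ∀ x < -δ, z x = -1) :
    (4 : ℝ) / 3 ≤ ∫ x : ℝ, ((γ / 2) * (iteratedDeriv 2 z x) ^ 2
      + (1 / 2) * (deriv z x) ^ 2 + (1 / 2) * (1 - (z x) ^ 2)) := by
  set F : ℝ → ℝ := fun x => (γ / 2) * (iteratedDeriv 2 z x) ^ 2
      + (1 / 2) * (deriv z x) ^ 2 + (1 / 2) * (1 - (z x) ^ 2) with hF
  set b : ℝ := δ + 1 with hb
  have hiter2 : iteratedDeriv 2 z = deriv (deriv z) := by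
    rw [show (2 : ℕ) = 1 + 1 from rfl, iteratedDeriv_succ, iteratedDeriv_one]
  -- derivatives vanish outside [-δ, δ]
  have hd1 : ∀ x ∈ Ioi δ, deriv z x = 0 := fun x hx =>
    deriv_vanish isOpen_Ioi (fun y hy => h1 y hy) hx
  have hd2 : ∀ x ∈ Iio (-δ), deriv z x = 0 := fun x hx =>
    deriv_vanish isOpen_Iio (fun y hy => h2 y hy) hx
  have hdd1 : ∀ x ∈ Ioi δ, iteratedDeriv 2 z x = 0 := fun x hx => by
    rw [hiter2]; exact deriv_vanish isOpen_Ioi hd1 hx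
  have hdd2 : ∀ x ∈ Iio (-δ), iteratedDeriv 2 z x = 0 := fun x hx => by
    rw [hiter2]; exact deriv_vanish isOpen_Iio hd2 hx
  -- continuity facts
  have hc0 : Continuous z := hz.continuous
  have hc1 : Continuous (deriv z) := hz.continuous_deriv (by norm_num)
  have hc2 : Continuous (iteratedDeriv 2 z) :=
    hz.continuous_iteratedDeriv 2 (by norm_num)
  have hcF : Continuous F := by
    apply Continuous.add
    apply Continuous.add
    · exact continuous_const.mul (hc2.pow 2)
    · exact continuous_const.mul (hc1.pow 2)
    · exact continuous_const.mul (continuous_const.sub (hc0.pow 2))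
  -- support of F
  have hsupp : support F ⊆ Set.Ioc (-b) b := by
    intro x hx
    by_contra hxmem
    apply hx
    have hx' : x ≤ -b ∨ b < x := by
      by_contra hcon
      push_neg at hcon
      exact hxmem (Set.mem_Ioc.2 ⟨by linarith [hcon.1], hcon.2⟩)
    rcases hx' with h | h
    · have hxlt : x < -δ := by simp only [hb] at h; linarith
      simp only [hF, hd2 x hxlt, hdd2 x hxlt, h2 x hxlt]
      ring
    · have hxgt : δ < x := by simp only [hb] at h; linarith
      simp only [hF, hd1 x hxgt, hdd1 x hxgt, h1 x hxgt]
      ring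
  rw [← intervalIntegral.integral_eq_integral_of_support_subset hsupp]
  -- the comparison function
  set G : ℝ → ℝ := fun x => deriv z x * (1 - (z x) ^ 2) with hG
  have hcG : Continuous G := hc1.mul (continuous_const.sub (hc0.pow 2))
  have hdiff : Differentiable ℝ z := hz.differentiable (by norm_num)
  have hgderiv : ∀ x : ℝ, HasDerivAt (fun y => z y - (z y) ^ 3 / 3) (G x) x := by
    intro x
    have hdz : HasDerivAt z (deriv z x) x := (hdiff x).hasDerivAt
    have h3 : HasDerivAt (fun y => (z y) ^ 3 / 3)
        (((3 : ℕ) * (z x) ^ 2 * deriv z x) / 3) x := (hdz.pow 3).div_const 3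
    have := hdz.fun_sub h3
    refine this.congr_deriv ?_
    simp only [hG]
    push_cast
    ring
  have hGint : IntervalIntegrable G volume (-b) b := hcG.intervalIntegrable _ _
  have hFint : IntervalIntegrable F volume (-b) b := hcF.intervalIntegrable _ _
  have hbpos : -b ≤ b := by simp only [hb]; linarith
  have hzb : z b = 1 := h1 b (by simp only [hb]; linarith)
  have hzmb : z (-b) = -1 := h2 (-b) (by simp only [hb]; linarith)
  have hcalc : ∫ x in (-b)..b, G x = (4 : ℝ) / 3 := by
    rw [intervalIntegral.integral_eq_sub_of_hasDerivAt
      (fun x _ => hgderiv x) hGint]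
    rw [hzb, hzmb]
    norm_num
  have hmonoInt : ∫ x in (-b)..b, G x ≤ ∫ x in (-b)..b, F x := by
    apply intervalIntegral.integral_mono_on hbpos hGint hFint
    intro x _
    have hr := hrange x
    have hs1 : (z x) ^ 2 ≤ 1 := by nlinarith [hr.1, hr.2]
    have hp := hmono x
    simp only [hG, hF]
    nlinarith [sq_nonneg (deriv z x - (1 - (z x) ^ 2)),
      mul_nonneg (by linarith : (0 : ℝ) ≤ γ / 2) (sq_nonneg (iteratedDeriv 2 z x)),
      mul_nonneg (by linarith : (0 : ℝ) ≤ 1 - (z x) ^ 2) (sq_nonneg (z x))]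
  linarith [hcalc ▸ hmonoInt]

theorem stmt17 (γ : ℝ) (hγ : 0 < γ)
    (V : Set (ℝ → ℝ))
    (hV : V = {z : ℝ → ℝ | ContDiff ℝ 2 z ∧ (∀ x, z x ∈ Set.Icc (-1 : ℝ) 1) ∧
      (∀ x, z (-x) = -z x) ∧ (∀ x, 0 ≤ deriv z x) ∧
      ∃ δ > (0 : ℝ), (∀ x > δ, z x = 1) ∧ (∀ x < -δ, z x = -1)})
    (j : (ℝ → ℝ) → ℝ)
    (hj : ∀ z, j z = ∫ x : ℝ, ((γ / 2) * (iteratedDeriv 2 z x) ^ 2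
      + (1 / 2) * (deriv z x) ^ 2 + (1 / 2) * (1 - (z x) ^ 2))) :
    (j '' V).Nonempty ∧ BddBelow (j '' V) ∧ 0 < sInf (j '' V) := by
  -- z₀ belongs to V
  have hz₀mem : z₀ ∈ V := by
    rw [hV]
    refine ⟨?_, ?_, ?_, ?_, 1, one_pos, ?_, ?_⟩
    · exact (Real.smoothTransition.contDiff).sub
        (Real.smoothTransition.contDiff.comp contDiff_neg)
    · intro x
      have h1 := Real.smoothTransition.nonneg x
      have h2 := Real.smoothTransition.le_one x
      have h3 := Real.smoothTransition.nonneg (-x)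
      have h4 := Real.smoothTransition.le_one (-x)
      constructor <;> simp only [z₀] <;> linarith
    · intro x; simp only [z₀, neg_neg]; ring
    · exact mono_deriv_nonneg z₀_mono
    · intro x hx
      simp only [z₀, Real.smoothTransition.one_of_one_le hx.le,
        Real.smoothTransition.zero_of_nonpos (by linarith : -x ≤ 0)]
      ring
    · intro x hx
      simp only [z₀, Real.smoothTransition.one_of_one_le (by linarith : (1 : ℝ) ≤ -x),
        Real.smoothTransition.zero_of_nonpos (by linarith : x ≤ 0)]
      ring
  have hne : (j '' V).Nonempty := ⟨j z₀, Set.mem_image_of_mem _ hz₀mem⟩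
  have hbound : ∀ y ∈ j '' V, (4 : ℝ) / 3 ≤ y := by
    rintro y ⟨z, hzV, rfl⟩
    rw [hV] at hzV
    obtain ⟨hz, hr, _, hm, δ, hδ, hz1, hz2⟩ := hzV
    rw [hj]
    exact key_bound γ hγ hz hr hm hδ hz1 hz2
  refine ⟨hne, ⟨4 / 3, hbound⟩, ?_⟩
  have := le_csInf hne hbound
  linarith
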